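/- Let G be a finite simple graph and y a vertex of G such that either (a) y has exactly one neighbor in G (y is a pendant vertex), or (b) there exists a vertex x ≠ y with N_G[x] = N_G[y] (x and y are true twins), or (c) there exists a vertex x ≠ y with N_G(x) = N_G(y) (x and y are false twins). If the induced subgraph of G on V(G) \ {y} is distance-hereditary, then G is distance-hereditary. (This is the inductive step of direction (ii) ⇒ (i) of the Bandelt–Mulder characterization, Theorem 1: graphs obtained from a single vertex by repeatedly adding pendant vertices, true twins, and false twins are distance-hereditary.) -/

import Mathlib

open SimpleGraph

/-- `G` is distance-hereditary: in every connected induced subgraph,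
distances agree with those in `G`. -/
def DistanceHereditary {V : Type*} (G : SimpleGraph V) : Prop :=
  ∀ S : Set V, (G.induce S).Connected →
    ∀ u v : S, (G.induce S).dist u v = G.dist u.1 v.1

/-- `G` contains `H` as an induced subgraph: there is an injection of the
vertices of `H` into those of `G` preserving adjacency and non-adjacency. -/
def ContainsInduced {α β : Type*} (H : SimpleGraph α) (G : SimpleGraph β) : Prop :=
  ∃ f : α → β, Function.Injective f ∧ ∀ a b : α, H.Adj a b ↔ G.Adj (f a) (f b)

/-- The house: vertices a,b,c,d,e = 0,1,2,3,4; edges ab,bc,cd,ad,ae,be. -/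
def house : SimpleGraph (Fin 5) :=
  SimpleGraph.fromEdgeSet {s(0,1), s(1,2), s(2,3), s(0,3), s(0,4), s(1,4)}

/-- The gem: vertices a,b,c,d,e = 0,1,2,3,4; edges ab,bc,cd,ae,be,ce,de. -/
def gem : SimpleGraph (Fin 5) :=
  SimpleGraph.fromEdgeSet {s(0,1), s(1,2), s(2,3), s(0,4), s(1,4), s(2,4), s(3,4)}

/-- The domino: vertices a,b,c,d,e,h = 0,1,2,3,4,5; edges ab,bc,cd,ad,be,eh,ch. -/
def domino : SimpleGraph (Fin 6) :=
  SimpleGraph.fromEdgeSet {s(0,1), s(1,2), s(2,3), s(0,3), s(1,4), s(4,5), s(2,5)}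

/-- `G` is (house, hole, domino, gem)-free. A hole is an induced `C_n`, `n ≥ 5`. -/
def HHDGFree {V : Type*} (G : SimpleGraph V) : Prop :=
  ¬ ContainsInduced house G ∧
  (∀ n : ℕ, 5 ≤ n → ¬ ContainsInduced (SimpleGraph.cycleGraph n) G) ∧
  ¬ ContainsInduced domino G ∧
  ¬ ContainsInduced gem G

/-- A stable (independent) set: pairwise non-adjacent vertices. -/
def IsStableSet {V : Type*} (G : SimpleGraph V) (s : Set V) : Prop :=
  s.Pairwise fun a b => ¬ G.Adj a b

/-- `T` is a cycle-transversal of `G`: every cycle of `G` contains a vertex of `T`. -/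
def IsCycleTransversal {V : Type*} (G : SimpleGraph V) (T : Set V) : Prop :=
  ∀ ⦃v : V⦄ (c : G.Walk v v), c.IsCycle → ∃ w ∈ c.support, w ∈ T

/-- A clique cycle-transversal (cct): a cycle-transversal that is a clique. -/
def IsCCT {V : Type*} (G : SimpleGraph V) (T : Set V) : Prop :=
  G.IsClique T ∧ IsCycleTransversal G T

set_option linter.unusedSectionVars false
set_option linter.unusedVariables false
set_option linter.unnecessarySimpa false

namespace DHAux

variable {V : Type*} [DecidableEq V] {G : SimpleGraph V}


variable {V : Type*} [DecidableEq V] {G : SimpleGraph V}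

lemma walk_of_induce {S : Set V} {a b : ↑S} (q : (G.induce S).Walk a b) :
    ∃ p : G.Walk a.1 b.1, p.length = q.length ∧ ∀ w ∈ p.support, ∃ z ∈ q.support, z.1 = w := by
  refine ⟨q.map (SimpleGraph.Embedding.induce S).toHom, Walk.length_map _ _, ?_⟩
  intro w hw
  replace hw : w ∈ (q.map (SimpleGraph.Embedding.induce S).toHom).support := hw
  rw [Walk.support_map] at hw
  obtain ⟨z, hz, rfl⟩ := List.mem_map.mp hw
  exact ⟨z, hz, rfl⟩

lemma induce_walk {S : Set V} {v : V} :
    ∀ {u : V} (p : G.Walk u v), (∀ w ∈ p.support, w ∈ S) → ∀ (hu : u ∈ S) (hv : v ∈ S),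
    ∃ q : (G.induce S).Walk ⟨u, hu⟩ ⟨v, hv⟩, q.length = p.length ∧
      ∀ z ∈ q.support, z.1 ∈ p.support := by
  intro u p
  induction p with
  | nil => exact fun _ hu hv => ⟨Walk.nil, rfl, by simp⟩
  | @cons a b c h p ih =>
    intro hp hu hv
    have hb : b ∈ S := hp b (by rw [Walk.support_cons]; exact List.mem_cons_of_mem _ p.start_mem_support)
    obtain ⟨q, hql, hqs⟩ := ih (fun w hw => hp w (by rw [Walk.support_cons]; exact List.mem_cons_of_mem _ hw)) hb hv
    refine ⟨Walk.cons (by simpa using h) q, by simp [Walk.length_cons, hql], ?_⟩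
    intro z hz
    rw [Walk.support_cons, List.mem_cons] at hz
    rcases hz with rfl | hz
    · exact Walk.start_mem_support _
    · rw [Walk.support_cons]; exact List.mem_cons_of_mem _ (hqs z hz)

lemma reroute {x y : V} (hyb : ∀ b, G.Adj y b → b = x ∨ G.Adj x b) :
    ∀ {u v : V} (p : G.Walk u v),
    ∃ q : G.Walk (if u = y then x else u) (if v = y then x else v),
      q.length ≤ p.length ∧ ∀ w ∈ q.support, ∃ z ∈ p.support, w = if z = y then x else z := by
  have key : ∀ a b, G.Adj a b →
      G.Adj (if a = y then x else a) (if b = y then x else b) ∨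
      (if a = y then x else a) = (if b = y then x else b) := by
    intro a b hab
    by_cases ha : a = y
    · rw [ha] at hab
      have hb : b ≠ y := hab.ne'
      rcases hyb b hab with hbx | h
      · right; rw [if_pos ha, if_neg hb, hbx]
      · left; rw [if_pos ha, if_neg hb]; exact h
    · by_cases hb : b = y
      · rw [hb] at hab
        rcases hyb a hab.symm with hax | h
        · right; rw [if_pos hb, if_neg ha, hax]
        · left; rw [if_pos hb, if_neg ha]; exact h.symm
      · left; rw [if_neg ha, if_neg hb]; exact hab
  intro u v p
  induction p with
  | nil =>
    refine ⟨Walk.nil, le_rfl, ?_⟩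
    intro w hw
    rw [Walk.support_nil, List.mem_singleton] at hw
    exact ⟨_, Walk.start_mem_support _, hw⟩
  | @cons a b c h p ih =>
    obtain ⟨q, hql, hqs⟩ := ih
    rcases key a b h with hadj | heq
    · refine ⟨Walk.cons hadj q, by simp only [Walk.length_cons]; omega, ?_⟩
      intro w hw
      rw [Walk.support_cons, List.mem_cons] at hw
      rcases hw with rfl | hw
      · exact ⟨a, Walk.start_mem_support _, rfl⟩
      · obtain ⟨z, hz, hwz⟩ := hqs w hw
        exact ⟨z, by rw [Walk.support_cons]; exact List.mem_cons_of_mem _ hz, hwz⟩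
    · refine ⟨q.copy heq.symm rfl, by rw [Walk.length_copy, Walk.length_cons]; omega, ?_⟩
      intro w hw
      rw [Walk.support_copy] at hw
      obtain ⟨z, hz, hwz⟩ := hqs w hw
      exact ⟨z, by rw [Walk.support_cons]; exact List.mem_cons_of_mem _ hz, hwz⟩

lemma exists_first_step {S : Set V} {a b : V} (p : G.Walk a b)
    (hp : ∀ w ∈ p.support, w ∈ S) (hab : a ≠ b) :
    ∃ c, G.Adj a c ∧ c ∈ S := by
  cases p with
  | nil => exact (hab rfl).elim
  | cons h q =>
    exact ⟨_, h, hp _ (by rw [Walk.support_cons]; exact List.mem_cons_of_mem _ q.start_mem_support)⟩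


lemma lemC {y x : V} (hxy : x ≠ y) (hyb : ∀ b, G.Adj y b → b = x ∨ G.Adj x b)
    (hDH : DistanceHereditary (G.induce ({y}ᶜ : Set V)))
    {S : Set V} (hSy : ∀ a ∈ S, a ≠ y) (hconn : (G.induce S).Connected)
    {u v : V} (hu : u ∈ S) (hv : v ∈ S) :
    ∃ p : G.Walk u v, p.length = G.dist u v ∧ ∀ w ∈ p.support, w ∈ S := by
  have hmemC : ∀ a ∈ S, a ∈ ({y}ᶜ : Set V) :=
    fun a ha => Set.mem_compl_singleton_iff.mpr (hSy a ha)
  set C : Set V := {y}ᶜ with hC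
  set S2 : Set ↑C := {a : ↑C | a.1 ∈ S} with hS2
  have lift : ∀ {a b : V} (p : G.Walk a b), (∀ w ∈ p.support, w ∈ S) → ∀ (ha : a ∈ S) (hb : b ∈ S),
      ∃ q : ((G.induce C).induce S2).Walk ⟨⟨a, hmemC a ha⟩, ha⟩ ⟨⟨b, hmemC b hb⟩, hb⟩,
        q.length = p.length := by
    intro a b p hp ha hb
    obtain ⟨q1, hq1l, hq1s⟩ :=
      induce_walk (S := C) p (fun w hw => hmemC w (hp w hw)) (hmemC a ha) (hmemC b hb)
    obtain ⟨q2, hq2l, _⟩ := induce_walk (S := S2) q1 (fun w hw => hp w.1 (hq1s w hw)) ha hb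
    exact ⟨q2, by rw [hq2l, hq1l]⟩
  have drop : ∀ {a b : ↑S2} (q : ((G.induce C).induce S2).Walk a b),
      ∃ p : G.Walk a.1.1 b.1.1, p.length = q.length ∧ ∀ w ∈ p.support, w ∈ S := by
    intro a b q
    obtain ⟨p1, hp1l, hp1s⟩ := walk_of_induce q
    obtain ⟨p0, hp0l, hp0s⟩ := walk_of_induce p1
    refine ⟨p0, by rw [hp0l, hp1l], ?_⟩
    intro w hw
    obtain ⟨z1, hz1, hz1w⟩ := hp0s w hw
    obtain ⟨z2, _, hz2w⟩ := hp1s z1 hz1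
    rw [← hz1w, ← hz2w]
    exact z2.2
  have conn2 : ((G.induce C).induce S2).Connected := by
    haveI : Nonempty ↑S2 := ⟨⟨⟨u, hmemC u hu⟩, hu⟩⟩
    refine ⟨?_⟩
    intro a b
    obtain ⟨w1⟩ := hconn.preconnected ⟨a.1.1, a.2⟩ ⟨b.1.1, b.2⟩
    obtain ⟨p, _, hps⟩ := walk_of_induce w1
    have hps' : ∀ w ∈ p.support, w ∈ S := by
      intro w hw
      obtain ⟨z, _, hzw⟩ := hps w hw
      rw [← hzw]; exact z.2
    obtain ⟨q, _⟩ := lift p hps' a.2 b.2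
    have hr := q.reachable
    have ea : (⟨⟨a.1.1, hmemC a.1.1 a.2⟩, a.2⟩ : ↑S2) = a := Subtype.ext (Subtype.ext rfl)
    have eb : (⟨⟨b.1.1, hmemC b.1.1 b.2⟩, b.2⟩ : ↑S2) = b := Subtype.ext (Subtype.ext rfl)
    rwa [ea, eb] at hr
  have hd := hDH S2 conn2 ⟨⟨u, hmemC u hu⟩, hu⟩ ⟨⟨v, hmemC v hv⟩, hv⟩
  obtain ⟨q2, hq2⟩ := (conn2.preconnected ⟨⟨u, hmemC u hu⟩, hu⟩
    ⟨⟨v, hmemC v hv⟩, hv⟩).exists_walk_length_eq_dist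
  obtain ⟨p, hpl, hps⟩ := drop q2
  have h1 : G.dist u v ≤ p.length := dist_le p
  obtain ⟨p0, hp0⟩ := p.reachable.exists_walk_length_eq_dist
  obtain ⟨q0, hq0l, hq0s⟩ := reroute hyb p0
  have h2 : (G.induce C).dist ⟨u, hmemC u hu⟩ ⟨v, hmemC v hv⟩ ≤ G.dist u v := by
    have hq0s' : ∀ w ∈ (q0.copy (if_neg (hSy u hu)) (if_neg (hSy v hv))).support, w ∈ C := by
      intro w hw
      rw [Walk.support_copy] at hw
      obtain ⟨z, _, hwz⟩ := hq0s w hw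
      rw [Set.mem_compl_singleton_iff, hwz]
      by_cases hzy : z = y
      · rw [if_pos hzy]; exact hxy
      · rw [if_neg hzy]; exact hzy
    obtain ⟨q1, hq1l, _⟩ := induce_walk _ hq0s' (hmemC u hu) (hmemC v hv)
    calc (G.induce C).dist ⟨u, hmemC u hu⟩ ⟨v, hmemC v hv⟩ ≤ q1.length := dist_le q1
      _ = _ := by rw [hq1l, Walk.length_copy]
      _ ≤ p0.length := hq0l
      _ = G.dist u v := hp0
  refine ⟨p, ?_, hps⟩
  have h3 : p.length = (G.induce C).dist ⟨u, hmemC u hu⟩ ⟨v, hmemC v hv⟩ := by rw [hpl, hq2, hd]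
  omega


lemma connT {y x : V} (hxy : x ≠ y) (hyb : ∀ b, G.Adj y b → b = x ∨ G.Adj x b)
    {S : Set V} (hconn : (G.induce S).Connected) (hyS : y ∈ S) :
    (G.induce (insert x (S \ {y}))).Connected := by
  have hxT : x ∈ insert x (S \ {y}) := Set.mem_insert _ _
  have claim : ∀ c : ↑(insert x (S \ {y})),
      (G.induce (insert x (S \ {y}))).Reachable ⟨x, hxT⟩ c := by
    intro c
    rcases Set.mem_insert_iff.mp c.2 with hcx | hcS
    · have : c = ⟨x, hxT⟩ := Subtype.ext hcx
      rw [this]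
    · obtain ⟨w1⟩ := hconn.preconnected ⟨y, hyS⟩ ⟨c.1, hcS.1⟩
      obtain ⟨p, _, hps⟩ := walk_of_induce w1
      have hps' : ∀ w ∈ p.support, w ∈ S := by
        intro w hw
        obtain ⟨z, _, hzw⟩ := hps w hw
        rw [← hzw]; exact z.2
      obtain ⟨q, _, hqs⟩ := reroute hyb p
      have hcy : c.1 ≠ y := fun h => hcS.2 (by simp [h])
      have hq's : ∀ w ∈ (q.copy (if_pos rfl) (if_neg hcy)).support, w ∈ insert x (S \ {y}) := by
        intro w hw
        rw [Walk.support_copy] at hw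
        obtain ⟨z, hz, hwz⟩ := hqs w hw
        by_cases hzy : z = y
        · rw [hwz, if_pos hzy]; exact hxT
        · rw [hwz, if_neg hzy]
          exact Set.mem_insert_of_mem _ ⟨hps' z hz, hzy⟩
      obtain ⟨q2, _, _⟩ := induce_walk _ hq's hxT (Set.mem_insert_of_mem _ hcS)
      exact q2.reachable
  haveI : Nonempty ↑(insert x (S \ {y})) := ⟨⟨x, hxT⟩⟩
  exact ⟨fun a b => (claim a).symm.trans (claim b)⟩


lemma aux1 {y x : V} (hxy : x ≠ y) (hyb : ∀ b, G.Adj y b → b = x ∨ G.Adj x b)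
    (hDH : DistanceHereditary (G.induce ({y}ᶜ : Set V)))
    {S : Set V} (hconn : (G.induce S).Connected) (hyS : y ∈ S)
    {u v : V} (hu : u ∈ S) (hv : v ∈ S) (hune : u ≠ y) (hvne : v ≠ y)
    (hor : x ∈ S ∨ (x ∉ S ∧ ∀ b, G.Adj x b → b = y ∨ G.Adj y b)) :
    ∃ p : G.Walk u v, p.length ≤ G.dist u v ∧ ∀ w ∈ p.support, w ∈ S := by
  have hconnT := connT hxy hyb hconn hyS
  have hTy : ∀ a ∈ insert x (S \ {y}), a ≠ y := by
    intro a ha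
    rcases Set.mem_insert_iff.mp ha with rfl | haS
    · exact hxy
    · exact haS.2
  obtain ⟨p, hpl, hps⟩ := lemC hxy hyb hDH hTy hconnT
    (Set.mem_insert_of_mem _ ⟨hu, hune⟩) (Set.mem_insert_of_mem _ ⟨hv, hvne⟩)
  rcases hor with hxS | ⟨hxS, hxb⟩
  · refine ⟨p, le_of_eq hpl, ?_⟩
    intro w hw
    rcases Set.mem_insert_iff.mp (hps w hw) with rfl | hw2
    · exact hxS
    · exact hw2.1
  · obtain ⟨q, hql, hqs⟩ := reroute hxb p
    refine ⟨q.copy (if_neg (fun h => hxS (by rw [← h]; exact hu))) (if_neg (fun h => hxS (by rw [← h]; exact hv))), ?_, ?_⟩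
    · rw [Walk.length_copy]; omega
    · intro w hw
      rw [Walk.support_copy] at hw
      obtain ⟨z, hz, hwz⟩ := hqs w hw
      by_cases hzx : z = x
      · rw [hwz, if_pos hzx]; exact hyS
      · rw [hwz, if_neg hzx]
        rcases Set.mem_insert_iff.mp (hps z hz) with h | h
        · exact absurd h hzx
        · exact h.1


lemma auxB {y x : V} (hxy : x ≠ y) (hyb : ∀ b, G.Adj y b → b = x ∨ G.Adj x b)
    (hextra : G.neighborSet y = {x} ∨ ((∀ b, G.Adj x b → b = y ∨ G.Adj y b) ∧
      (G.Adj y x ∨ ∀ b, G.Adj y b → G.Adj x b)))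
    (hDH : DistanceHereditary (G.induce ({y}ᶜ : Set V)))
    {S : Set V} (hconn : (G.induce S).Connected) (hyS : y ∈ S)
    {v : V} (hv : v ∈ S) (hvy : v ≠ y) :
    ∃ p : G.Walk y v, p.length ≤ G.dist y v ∧ ∀ w ∈ p.support, w ∈ S := by
  obtain ⟨w1⟩ := hconn.preconnected ⟨y, hyS⟩ ⟨v, hv⟩
  obtain ⟨pS0, _, hpSs⟩ := walk_of_induce w1
  have pS : G.Walk y v := pS0
  have hpS' : ∀ w ∈ pS0.support, w ∈ S := by
    intro w hw
    obtain ⟨z, _, hzw⟩ := hpSs w hw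
    rw [← hzw]; exact z.2
  obtain ⟨bS, hbS_adj0, hbS_mem⟩ := exists_first_step pS0 hpS' (Ne.symm hvy)
  have hbS_adj : G.Adj y bS := hbS_adj0
  have hreach : G.Reachable y v := pS0.reachable
  obtain ⟨p0, hp0⟩ := hreach.exists_walk_length_eq_dist
  cases p0 with
  | nil => exact (hvy rfl).elim
  | @cons _ b0 _ h0 p1 =>
    rw [Walk.length_cons] at hp0
    have hd1 : 1 ≤ G.dist y v := by omega
    rcases hextra with hNy | ⟨hxb, hone⟩
    · -- pendant
      have hbx : bS = x := by
        have h9 : bS ∈ G.neighborSet y := hbS_adj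
        rwa [hNy, Set.mem_singleton_iff] at h9
      have hxS : x ∈ S := hbx ▸ hbS_mem
      have hAdjyx : G.Adj y x := hbx ▸ hbS_adj
      by_cases hvx : v = x
      · refine ⟨(Walk.cons hAdjyx Walk.nil).copy rfl hvx.symm, ?_, ?_⟩
        · rw [Walk.length_copy]; simpa using hd1
        · intro w hw
          rw [Walk.support_copy] at hw
          simp only [Walk.support_cons, Walk.support_nil, List.mem_cons,
            List.mem_singleton] at hw
          rcases hw with h1 | h1 | h1
          · rw [h1]; exact hyS
          · rw [h1]; exact hxS
          · exact absurd h1 (by simp)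
      · have hb0x : b0 = x := by
          have h9 : b0 ∈ G.neighborSet y := h0
          rwa [hNy, Set.mem_singleton_iff] at h9
        obtain ⟨q, hql, hqs⟩ := aux1 hxy hyb hDH hconn hyS hxS hv hxy hvy (Or.inl hxS)
        refine ⟨Walk.cons hAdjyx q, ?_, ?_⟩
        · rw [Walk.length_cons]
          have h5 : G.dist x v ≤ p1.length := by
            have h6 := dist_le (p1.copy hb0x rfl)
            rwa [Walk.length_copy] at h6
          omega
        · intro w hw
          rw [Walk.support_cons, List.mem_cons] at hw
          rcases hw with h1 | hw
          · rw [h1]; exact hyS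
          · exact hqs w hw
    · -- twin
      by_cases hvx : v = x
      · rcases hone with hAdjyx | hmono
        · refine ⟨(Walk.cons hAdjyx Walk.nil).copy rfl hvx.symm, ?_, ?_⟩
          · rw [Walk.length_copy]; simpa using hd1
          · intro w hw
            rw [Walk.support_copy] at hw
            simp only [Walk.support_cons, Walk.support_nil, List.mem_cons,
              List.mem_singleton] at hw
            rcases hw with h1 | h1 | h1
            · rw [h1]; exact hyS
            · rw [h1, ← hvx]; exact hv
            · exact absurd h1 (by simp)
        · have hAdjxb : G.Adj x bS := hmono bS hbS_adj
          have hnadj : ¬ G.Adj y x := fun h => G.irrefl (hmono x h)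
          have hd2 : 2 ≤ G.dist y v := by
            rcases Nat.eq_zero_or_pos p1.length with h | h
            · exfalso
              have hb0v : b0 = v := Walk.eq_of_length_eq_zero h
              have h9 : G.Adj y b0 := h0
              rw [hb0v, hvx] at h9
              exact hnadj h9
            · omega
          refine ⟨(Walk.cons hbS_adj (Walk.cons hAdjxb.symm Walk.nil)).copy rfl hvx.symm,
            ?_, ?_⟩
          · rw [Walk.length_copy]; simpa using hd2
          · intro w hw
            rw [Walk.support_copy] at hw
            simp only [Walk.support_cons, Walk.support_nil, List.mem_cons,
              List.mem_singleton] at hw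
            rcases hw with h1 | h1 | h1 | h1
            · rw [h1]; exact hyS
            · rw [h1]; exact hbS_mem
            · rw [h1, ← hvx]; exact hv
            · exact absurd h1 (by simp)
      · -- v ≠ x
        have hdxv : G.dist x v ≤ G.dist y v := by
          have h9 : G.Adj y b0 := h0
          obtain ⟨q0, hq0l, _⟩ := reroute hyb (Walk.cons h9 (p1 : G.Walk b0 v))
          have h8 := dist_le (q0.copy (if_pos rfl) (if_neg hvy))
          rw [Walk.length_copy] at h8
          rw [Walk.length_cons] at hq0l
          have h7 : p1.length = (p1 : G.Walk b0 v).length := rfl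
          omega
        have hconnT := connT hxy hyb hconn hyS
        have hTy : ∀ a ∈ insert x (S \ {y}), a ≠ y := by
          intro a ha
          rcases Set.mem_insert_iff.mp ha with rfl | haS
          · exact hxy
          · exact haS.2
        obtain ⟨p, hpl, hps⟩ := lemC hxy hyb hDH hTy hconnT
          (Set.mem_insert _ _) (Set.mem_insert_of_mem _ ⟨hv, hvy⟩)
        obtain ⟨q, hql, hqs⟩ := reroute hxb p
        refine ⟨q.copy (if_pos rfl) (if_neg hvx), ?_, ?_⟩
        · rw [Walk.length_copy]; omega
        · intro w hw
          rw [Walk.support_copy] at hw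
          obtain ⟨z, hz, hwz⟩ := hqs w hw
          by_cases hzx : z = x
          · rw [hwz, if_pos hzx]; exact hyS
          · rw [hwz, if_neg hzx]
            rcases Set.mem_insert_iff.mp (hps z hz) with h | h
            · exact absurd h hzx
            · exact h.1


end DHAux

open DHAux in
/-- adding a pendant vertex, a true twin, or a false twin to a
distance-hereditary graph yields a distance-hereditary graph. -/
theorem distanceHereditary_of_add_pendant_or_twin {V : Type*} [Fintype V]
    (G : SimpleGraph V) (y : V)
    (hy : (∃ w : V, G.neighborSet y = {w}) ∨
      (∃ x : V, x ≠ y ∧ insert x (G.neighborSet x) = insert y (G.neighborSet y)) ∨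
      (∃ x : V, x ≠ y ∧ G.neighborSet x = G.neighborSet y))
    (hDH : DistanceHereditary (G.induce {y}ᶜ)) :
    DistanceHereditary G := by
  classical
  obtain ⟨x, hxy, hyb, hextra⟩ : ∃ x : V, x ≠ y ∧ (∀ b, G.Adj y b → b = x ∨ G.Adj x b) ∧
      (G.neighborSet y = {x} ∨ ((∀ b, G.Adj x b → b = y ∨ G.Adj y b) ∧
        (G.Adj y x ∨ ∀ b, G.Adj y b → G.Adj x b))) := by
    rcases hy with ⟨w, hw⟩ | ⟨x, hne, hN⟩ | ⟨x, hne, hN⟩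
    · have hadj : G.Adj y w := by
        have : w ∈ G.neighborSet y := by rw [hw]; exact rfl
        exact this
      refine ⟨w, hadj.ne', fun b hb => Or.inl ?_, Or.inl hw⟩
      have h9 : b ∈ G.neighborSet y := hb
      rwa [hw, Set.mem_singleton_iff] at h9
    · have hyb : ∀ b, G.Adj y b → b = x ∨ G.Adj x b := by
        intro b hb
        have h9 : b ∈ insert x (G.neighborSet x) := by
          rw [hN]; exact Set.mem_insert_of_mem _ hb
        exact Set.mem_insert_iff.mp h9
      have hxb : ∀ b, G.Adj x b → b = y ∨ G.Adj y b := by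
        intro b hb
        have h9 : b ∈ insert y (G.neighborSet y) := by
          rw [← hN]; exact Set.mem_insert_of_mem _ hb
        exact Set.mem_insert_iff.mp h9
      have hAdjyx : G.Adj y x := by
        have h9 : x ∈ insert y (G.neighborSet y) := by
          rw [← hN]; exact Set.mem_insert _ _
        rcases Set.mem_insert_iff.mp h9 with h | h
        · exact absurd h hne
        · exact h
      exact ⟨x, hne, hyb, Or.inr ⟨hxb, Or.inl hAdjyx⟩⟩
    · refine ⟨x, hne, ?_, Or.inr ⟨?_, Or.inr ?_⟩⟩
      · intro b hb
        refine Or.inr ?_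
        have h9 : b ∈ G.neighborSet y := hb
        rw [← hN] at h9
        exact h9
      · intro b hb
        refine Or.inr ?_
        have h9 : b ∈ G.neighborSet x := hb
        rw [hN] at h9
        exact h9
      · intro b hb
        have h9 : b ∈ G.neighborSet y := hb
        rw [← hN] at h9
        exact h9
  intro S hconn u v
  have key : ∃ p : G.Walk u.1 v.1, p.length ≤ G.dist u.1 v.1 ∧ ∀ w ∈ p.support, w ∈ S := by
    by_cases huv : (u.1 : V) = v.1
    · have huv' : u = v := Subtype.ext huv
      subst huv'
      exact ⟨Walk.nil, Nat.zero_le _, by simpa using u.2⟩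
    · by_cases hyS : y ∈ S
      · by_cases huy : u.1 = y
        · by_cases hvy : v.1 = y
          · exact absurd (huy.trans hvy.symm) huv
          · obtain ⟨p, h1, h2⟩ := auxB hxy hyb hextra hDH hconn hyS v.2 hvy
            refine ⟨p.copy huy.symm rfl, ?_, ?_⟩
            · rw [Walk.length_copy, huy]; exact h1
            · intro w hw; rw [Walk.support_copy] at hw; exact h2 w hw
        · by_cases hvy : v.1 = y
          · obtain ⟨p, h1, h2⟩ := auxB hxy hyb hextra hDH hconn hyS u.2 huy
            refine ⟨(p.reverse).copy rfl hvy.symm, ?_, ?_⟩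
            · rw [Walk.length_copy, Walk.length_reverse, hvy, dist_comm]; exact h1
            · intro w hw
              rw [Walk.support_copy, Walk.support_reverse, List.mem_reverse] at hw
              exact h2 w hw
          · have hor : x ∈ S ∨ (x ∉ S ∧ ∀ b, G.Adj x b → b = y ∨ G.Adj y b) := by
              by_cases hxS : x ∈ S
              · exact Or.inl hxS
              · refine Or.inr ⟨hxS, ?_⟩
                rcases hextra with hNy | ⟨hxb, _⟩
                · exfalso
                  obtain ⟨w1⟩ := hconn.preconnected ⟨y, hyS⟩ u
                  obtain ⟨pS, _, hpSs⟩ := walk_of_induce w1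
                  have hpS' : ∀ w ∈ pS.support, w ∈ S := by
                    intro w hw
                    obtain ⟨z, _, hzw⟩ := hpSs w hw
                    rw [← hzw]; exact z.2
                  obtain ⟨c, hc_adj, hc_mem⟩ := exists_first_step pS hpS' (Ne.symm huy)
                  have hcx : c = x := by
                    have h9 : c ∈ G.neighborSet y := hc_adj
                    rwa [hNy, Set.mem_singleton_iff] at h9
                  exact hxS (hcx ▸ hc_mem)
                · exact hxb
            obtain ⟨p, h1, h2⟩ := aux1 hxy hyb hDH hconn hyS u.2 v.2 huy hvy hor
            exact ⟨p, h1, h2⟩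
      · have hSy : ∀ a ∈ S, a ≠ y := fun a ha h => hyS (h ▸ ha)
        obtain ⟨p, h1, h2⟩ := lemC hxy hyb hDH hSy hconn u.2 v.2
        exact ⟨p, le_of_eq h1, h2⟩
  have hge : G.dist u.1 v.1 ≤ (G.induce S).dist u v := by
    obtain ⟨q, hq⟩ := (hconn.preconnected u v).exists_walk_length_eq_dist
    obtain ⟨p, hpl, _⟩ := walk_of_induce q
    calc G.dist u.1 v.1 ≤ p.length := dist_le p
      _ = (G.induce S).dist u v := by rw [hpl, hq]
  obtain ⟨p, hpl, hps⟩ := key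
  obtain ⟨q, hql, _⟩ := induce_walk p hps u.2 v.2
  have hle : (G.induce S).dist u v ≤ G.dist u.1 v.1 := by
    have h9 := dist_le q
    rw [hql] at h9
    exact le_trans h9 hpl
  omega
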